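/- Let X, Y be measurable spaces, ℓ a positive integer, and for 1 ≤ i ≤ ℓ and n ∈ ℕ let ξ_i : Y → X, h_{i,n} : X → X and f_i : X → ℝ be measurable maps; set F_n(y) = Π_{i=1}^ℓ f_i(h_{i,n} ξ_i(y)) and let ν be a probability measure on Y such that every F_n is square integrable. Assume there exist M ≥ 1, 0 < δ < 1, functions b_{i,j} : ℕ × ℕ → [1, ∞] and c_{i,j} : ℕ → [1, ∞] (convention ∞^{−δ} = 0) such that: |∫_Y F_m F_n dν| ≤ M Σ_{i,j=1}^ℓ (b_{i,j}(m,n)^{−δ} + c_{i,j}(m)^{−δ} + c_{i,j}(n)^{−δ}) for all m, n ∈ ℕ; |{k ∈ ℕ : c_{i,j}(k) ≤ n}| ≤ M n for all i, j, n; and |{k ∈ ℕ : b_{i,j}(m,k) ≤ n}| ≤ M n for all i, j, m, n. Then for all nonnegative integers m < n, ∫_Y (Σ_{m < k ≤ n} F_k(y))² dν(y) ≤ 2^{3+δ} M^{1+δ} (1 − δ)^{−1} ℓ² (n − m)^{2−δ}. -/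

import Mathlib

open MeasureTheory
open scoped ENNReal


private lemma bernoulli_step {δ : ℝ} (hδ0 : 0 < δ) (hδ1 : δ < 1) {a : ℝ} (ha : 0 ≤ a) :
    (1 - δ) * (a + 1) ^ (-δ) ≤ (a + 1) ^ (1 - δ) - a ^ (1 - δ) := by
  rcases eq_or_lt_of_le ha with rfl | ha'
  · rw [Real.zero_rpow (by linarith : (1 : ℝ) - δ ≠ 0)]
    simp [Real.one_rpow]
    linarith
  · obtain ⟨ξ, hξ, hslope⟩ := exists_hasDerivAt_eq_slope (fun x => x ^ (1 - δ))
      (fun x => (1 - δ) * x ^ (1 - δ - 1)) (by linarith : a < a + 1)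
      (fun x hx => (Real.continuousAt_rpow_const x (1 - δ)
        (Or.inl (ne_of_gt (lt_of_lt_of_le ha' hx.1)))).continuousWithinAt)
      (fun x hx => Real.hasDerivAt_rpow_const (Or.inl (ne_of_gt (lt_trans ha' hx.1))))
    have hξ0 : 0 < ξ := lt_trans ha' hξ.1
    have hd : (1 - δ) * ξ ^ (1 - δ - 1) = (a + 1) ^ (1 - δ) - a ^ (1 - δ) := by
      rw [hslope]; ring_nf
    have hmono : (a + 1) ^ (-δ) ≤ ξ ^ (-δ) :=
      Real.rpow_le_rpow_of_nonpos hξ0 hξ.2.le (by linarith)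
    have : 1 - δ - 1 = -δ := by ring
    rw [this] at hd
    rw [← hd]
    have h1δ : (0 : ℝ) ≤ 1 - δ := by linarith
    exact mul_le_mul_of_nonneg_left hmono h1δ

private lemma sum_rpow_neg_le {δ : ℝ} (hδ0 : 0 < δ) (hδ1 : δ < 1) (N : ℕ) :
    ∑ r ∈ Finset.Icc 1 N, (r : ℝ) ^ (-δ) ≤ (N : ℝ) ^ (1 - δ) / (1 - δ) := by
  have h1δ : (0 : ℝ) < 1 - δ := by linarith
  induction N with
  | zero => simp [Real.zero_rpow (ne_of_gt h1δ)]
  | succ n ih =>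
    rw [Finset.sum_Icc_succ_top (by omega : 1 ≤ n + 1)]
    have key := bernoulli_step hδ0 hδ1 (a := (n : ℝ)) (Nat.cast_nonneg n)
    have hstep : ((n : ℝ) + 1) ^ (-δ) ≤ (((n : ℝ) + 1) ^ (1 - δ) - (n : ℝ) ^ (1 - δ)) / (1 - δ) :=
      (le_div_iff₀ h1δ).mpr (by linarith)
    have hdiv : (n : ℝ) ^ (1 - δ) / (1 - δ) +
        (((n : ℝ) + 1) ^ (1 - δ) - (n : ℝ) ^ (1 - δ)) / (1 - δ) =
        ((n : ℝ) + 1) ^ (1 - δ) / (1 - δ) := by ring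
    push_cast
    linarith


private lemma sum_toReal_rpow_neg_le {M δ : ℝ} (hM : 1 ≤ M) (hδ0 : 0 < δ)
    (a : ℕ → ℝ≥0∞) (ha1 : ∀ k, 1 ≤ a k) (s : Finset ℕ) (hs : ∀ k ∈ s, 1 ≤ k)
    (hcard : ∀ n : ℕ, 1 ≤ n → ∀ u : Finset ℕ, (∀ k ∈ u, 1 ≤ k ∧ a k ≤ (n : ℝ≥0∞)) →
      (u.card : ℝ) ≤ M * n) :
    ∑ k ∈ s, (a k ^ (-δ)).toReal ≤ (2 * M) ^ δ * ∑ r ∈ Finset.Icc 1 s.card, (r : ℝ) ^ (-δ) := by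
  have hM0 : (0 : ℝ) < M := by linarith
  set rank : ℕ → ℕ := fun k =>
    (s.filter fun k' => a k' < a k ∨ (a k' = a k ∧ k' ≤ k)).card with hrank
  -- rank is strictly monotone along the lexicographic order (a k, k)
  have hmono : ∀ k1 : ℕ, ∀ k2 ∈ s, (a k1 < a k2 ∨ (a k1 = a k2 ∧ k1 < k2)) →
      rank k1 < rank k2 := by
    intro k1 k2 hk2 hlt
    apply Finset.card_lt_card
    rw [Finset.ssubset_iff_of_subset]
    · refine ⟨k2, Finset.mem_filter.mpr ⟨hk2, Or.inr ⟨rfl, le_refl _⟩⟩, ?_⟩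
      intro hmem
      rcases Finset.mem_filter.mp hmem with ⟨-, h2⟩
      rcases hlt with hlt | ⟨heq, hlt⟩
      · rcases h2 with h2 | ⟨h2, -⟩
        · exact absurd hlt (lt_asymm h2)
        · rw [h2] at hlt; exact lt_irrefl _ hlt
      · rcases h2 with h2 | ⟨-, h2⟩
        · rw [heq] at h2; exact lt_irrefl _ h2
        · omega
    · intro k' hk'
      rcases Finset.mem_filter.mp hk' with ⟨hk's, h2⟩
      refine Finset.mem_filter.mpr ⟨hk's, ?_⟩
      rcases hlt with hlt | ⟨heq, hlt⟩
      · rcases h2 with h2 | ⟨h2, -⟩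
        · exact Or.inl (lt_trans h2 hlt)
        · exact Or.inl (h2 ▸ hlt)
      · rcases h2 with h2 | ⟨h2, h3⟩
        · exact Or.inl (heq ▸ h2)
        · exact Or.inr ⟨heq ▸ h2, by omega⟩
  have hinj : Set.InjOn rank s := by
    intro k1 h1 k2 h2 heq
    by_contra hne
    rcases lt_trichotomy (a k1) (a k2) with hlt | haeq | hlt
    · exact absurd heq (ne_of_lt (hmono k1 k2 h2 (Or.inl hlt)))
    · rcases lt_trichotomy k1 k2 with hlt | rfl | hlt
      · exact absurd heq (ne_of_lt (hmono k1 k2 h2 (Or.inr ⟨haeq, hlt⟩)))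
      · exact hne rfl
      · exact absurd heq.symm (ne_of_lt (hmono k2 k1 h1 (Or.inr ⟨haeq.symm, hlt⟩)))
    · exact absurd heq.symm (ne_of_lt (hmono k2 k1 h1 (Or.inl hlt)))
  have hrank1 : ∀ k ∈ s, 1 ≤ rank k := by
    intro k hk
    have : k ∈ s.filter fun k' => a k' < a k ∨ (a k' = a k ∧ k' ≤ k) :=
      Finset.mem_filter.mpr ⟨hk, Or.inr ⟨rfl, le_refl _⟩⟩
    exact Finset.card_pos.mpr ⟨k, this⟩
  have hrankcard : ∀ k, rank k ≤ s.card := fun k =>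
    Finset.card_le_card (Finset.filter_subset _ _)
  -- termwise bound
  have hterm : ∀ k ∈ s, (a k ^ (-δ)).toReal ≤ (2 * M) ^ δ * (rank k : ℝ) ^ (-δ) := by
    intro k hk
    by_cases htop : a k = ⊤
    · rw [htop, ENNReal.top_rpow_of_neg (by linarith)]
      simp
      positivity
    · set x := (a k).toReal with hx
      have hx1 : 1 ≤ x := by
        rw [← ENNReal.toReal_one]
        exact ENNReal.toReal_mono htop (ha1 k)
      set t := ⌈x⌉₊ with ht
      have ht1 : 1 ≤ t := Nat.one_le_ceil_iff.mpr (by linarith)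
      have hat : a k ≤ (t : ℝ≥0∞) := by
        calc a k = ENNReal.ofReal x := (ENNReal.ofReal_toReal htop).symm
          _ ≤ ENNReal.ofReal (t : ℝ) := ENNReal.ofReal_le_ofReal (Nat.le_ceil x)
          _ = (t : ℝ≥0∞) := ENNReal.ofReal_natCast t
      have hcardk : (rank k : ℝ) ≤ M * t := by
        apply hcard t ht1
        intro k' hk'
        rcases Finset.mem_filter.mp hk' with ⟨hk's, h2⟩
        refine ⟨hs k' hk's, le_trans ?_ hat⟩
        rcases h2 with h2 | ⟨h2, -⟩
        · exact h2.le
        · exact h2.le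
      have htx : (t : ℝ) ≤ x + 1 := (Nat.ceil_lt_add_one (by linarith)).le
      have hrank_le : (rank k : ℝ) ≤ 2 * M * x := by nlinarith
      have hrankpos : (0 : ℝ) < (rank k : ℝ) := by
        exact_mod_cast Nat.lt_of_lt_of_le Nat.zero_lt_one (hrank1 k hk)
      have hdivpos : (0 : ℝ) < (rank k : ℝ) / (2 * M) := by positivity
      have hxge : (rank k : ℝ) / (2 * M) ≤ x := by
        rw [div_le_iff₀ (by positivity)]; nlinarith
      have h1 : (a k ^ (-δ)).toReal = x ^ (-δ) := (ENNReal.toReal_rpow _ _).symm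
      rw [h1]
      calc x ^ (-δ) ≤ ((rank k : ℝ) / (2 * M)) ^ (-δ) :=
            Real.rpow_le_rpow_of_nonpos hdivpos hxge (by linarith)
        _ = (2 * M) ^ δ * (rank k : ℝ) ^ (-δ) := by
            rw [Real.div_rpow hrankpos.le (by positivity), Real.rpow_neg (by positivity : (0:ℝ) ≤ 2*M)]
            field_simp
  calc ∑ k ∈ s, (a k ^ (-δ)).toReal ≤ ∑ k ∈ s, (2 * M) ^ δ * (rank k : ℝ) ^ (-δ) :=
        Finset.sum_le_sum hterm
    _ = (2 * M) ^ δ * ∑ k ∈ s, (rank k : ℝ) ^ (-δ) := by rw [Finset.mul_sum]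
    _ = (2 * M) ^ δ * ∑ r ∈ s.image rank, (r : ℝ) ^ (-δ) := by
        rw [Finset.sum_image (fun x hx y hy => hinj hx hy)]
    _ ≤ (2 * M) ^ δ * ∑ r ∈ Finset.Icc 1 s.card, (r : ℝ) ^ (-δ) := by
        apply mul_le_mul_of_nonneg_left _ (by positivity)
        apply Finset.sum_le_sum_of_subset_of_nonneg
        · intro r hr
          rcases Finset.mem_image.mp hr with ⟨k, hk, rfl⟩
          exact Finset.mem_Icc.mpr ⟨hrank1 k hk, hrankcard k⟩
        · intro r _ _; positivity

theorem second_moment_bound_delta_lt_one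
    {X Y : Type*} [MeasurableSpace X] [MeasurableSpace Y]
    (ν : Measure Y) [IsProbabilityMeasure ν]
    (ℓ : ℕ) (hℓ : 1 ≤ ℓ)
    (ξ : Fin ℓ → Y → X) (hξ : ∀ i, Measurable (ξ i))
    (h : Fin ℓ → ℕ → X → X) (hh : ∀ i n, Measurable (h i n))
    (f : Fin ℓ → X → ℝ) (hf : ∀ i, Measurable (f i))
    (F : ℕ → Y → ℝ) (hF : ∀ n y, F n y = ∏ i, f i (h i n (ξ i y)))
    (hFL2 : ∀ n : ℕ, 1 ≤ n → MemLp (F n) 2 ν)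
    (M δ : ℝ) (hM : 1 ≤ M) (hδ0 : 0 < δ) (hδ1 : δ < 1)
    (b : Fin ℓ → Fin ℓ → ℕ → ℕ → ℝ≥0∞) (hb1 : ∀ i j m n, 1 ≤ b i j m n)
    (c : Fin ℓ → Fin ℓ → ℕ → ℝ≥0∞) (hc1 : ∀ i j n, 1 ≤ c i j n)
    (hcorr : ∀ m n : ℕ, 1 ≤ m → 1 ≤ n →
      |∫ y, F m y * F n y ∂ν| ≤
        M * ∑ i, ∑ j, ((b i j m n ^ (-δ)).toReal + (c i j m ^ (-δ)).toReal +
          (c i j n ^ (-δ)).toReal))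
    (hccard : ∀ i j, ∀ n : ℕ, 1 ≤ n → ∀ s : Finset ℕ,
      (∀ k ∈ s, 1 ≤ k ∧ c i j k ≤ (n : ℝ≥0∞)) → (s.card : ℝ) ≤ M * n)
    (hbcard : ∀ i j, ∀ m n : ℕ, 1 ≤ m → 1 ≤ n → ∀ s : Finset ℕ,
      (∀ k ∈ s, 1 ≤ k ∧ b i j m k ≤ (n : ℝ≥0∞)) → (s.card : ℝ) ≤ M * n) :
    ∀ m n : ℕ, m < n →
      ∫ y, (∑ k ∈ Finset.Ioc m n, F k y) ^ 2 ∂ν ≤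
        (2 : ℝ) ^ (3 + δ) * M ^ (1 + δ) * (1 - δ)⁻¹ * (ℓ : ℝ) ^ 2 *
          ((n : ℝ) - (m : ℝ)) ^ (2 - δ) := by
  intro m n hmn
  have h1δ : (0 : ℝ) < 1 - δ := by linarith
  set I := Finset.Ioc m n with hI
  have hIcard : I.card = n - m := Nat.card_Ioc m n
  have hmem1 : ∀ k ∈ I, 1 ≤ k := by
    intro k hk; rw [hI, Finset.mem_Ioc] at hk; omega
  have hint : ∀ k ∈ I, ∀ k' ∈ I, Integrable (fun y => F k y * F k' y) ν := by
    intro k hk k' hk'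
    have h2 : MemLp ((F k) • (F k')) 1 ν :=
      (hFL2 k' (hmem1 k' hk')).smul (hFL2 k (hmem1 k hk)) (hpqr := ⟨by norm_num [ENNReal.inv_two_add_inv_two]⟩)
    rw [memLp_one_iff_integrable] at h2
    exact h2
  have hexp : ∫ y, (∑ k ∈ I, F k y) ^ 2 ∂ν = ∑ k ∈ I, ∑ k' ∈ I, ∫ y, F k y * F k' y ∂ν := by
    calc ∫ y, (∑ k ∈ I, F k y) ^ 2 ∂ν = ∫ y, ∑ k ∈ I, ∑ k' ∈ I, F k y * F k' y ∂ν := by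
          congr 1; funext y; rw [sq, Finset.sum_mul_sum]
      _ = ∑ k ∈ I, ∫ y, ∑ k' ∈ I, F k y * F k' y ∂ν :=
          integral_finset_sum I fun k hk => integrable_finset_sum I fun k' hk' =>
            hint k hk k' hk'
      _ = ∑ k ∈ I, ∑ k' ∈ I, ∫ y, F k y * F k' y ∂ν :=
          Finset.sum_congr rfl fun k hk => integral_finset_sum I fun k' hk' => hint k hk k' hk'
  set N := I.card with hNdef
  have hNpos : 0 < N := by omega
  have hN0 : (0 : ℝ) < (N : ℝ) := by exact_mod_cast hNpos
  set S := ∑ r ∈ Finset.Icc 1 N, (r : ℝ) ^ (-δ) with hS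
  have hSnn : 0 ≤ S := Finset.sum_nonneg fun r _ => Real.rpow_nonneg (Nat.cast_nonneg r) _
  set K := (2 * M) ^ δ with hK
  have hKnn : 0 ≤ K := Real.rpow_nonneg (by linarith) _
  have hcsum : ∀ i j, ∑ k ∈ I, (c i j k ^ (-δ)).toReal ≤ K * S := fun i j =>
    sum_toReal_rpow_neg_le hM hδ0 (c i j) (hc1 i j) I hmem1
      (fun t ht u hu => hccard i j t ht u hu)
  have hbsum : ∀ i j, ∀ k ∈ I, ∑ k' ∈ I, (b i j k k' ^ (-δ)).toReal ≤ K * S :=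
    fun i j k hk => sum_toReal_rpow_neg_le hM hδ0 (b i j k) (hb1 i j k) I hmem1
      (fun t ht u hu => hbcard i j k t (hmem1 k hk) ht u hu)
  -- abbreviation for the correlation summand
  have hchain : ∑ k ∈ I, ∑ k' ∈ I, ∫ y, F k y * F k' y ∂ν ≤
      M * ∑ k ∈ I, ∑ k' ∈ I, ∑ i, ∑ j, ((b i j k k' ^ (-δ)).toReal +
        (c i j k ^ (-δ)).toReal + (c i j k' ^ (-δ)).toReal) := by
    calc ∑ k ∈ I, ∑ k' ∈ I, ∫ y, F k y * F k' y ∂ν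
        ≤ ∑ k ∈ I, ∑ k' ∈ I, |∫ y, F k y * F k' y ∂ν| :=
          Finset.sum_le_sum fun k _ => Finset.sum_le_sum fun k' _ => le_abs_self _
      _ ≤ ∑ k ∈ I, ∑ k' ∈ I, M * ∑ i, ∑ j, ((b i j k k' ^ (-δ)).toReal +
            (c i j k ^ (-δ)).toReal + (c i j k' ^ (-δ)).toReal) :=
          Finset.sum_le_sum fun k hk => Finset.sum_le_sum fun k' hk' =>
            hcorr k k' (hmem1 k hk) (hmem1 k' hk')
      _ = M * ∑ k ∈ I, ∑ k' ∈ I, ∑ i, ∑ j, ((b i j k k' ^ (-δ)).toReal +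
            (c i j k ^ (-δ)).toReal + (c i j k' ^ (-δ)).toReal) := by
          simp only [← Finset.mul_sum]
  have hswap : ∑ k ∈ I, ∑ k' ∈ I, ∑ i : Fin ℓ, ∑ j : Fin ℓ, ((b i j k k' ^ (-δ)).toReal +
      (c i j k ^ (-δ)).toReal + (c i j k' ^ (-δ)).toReal)
      = ∑ i : Fin ℓ, ∑ j : Fin ℓ, ∑ k ∈ I, ∑ k' ∈ I, ((b i j k k' ^ (-δ)).toReal +
      (c i j k ^ (-δ)).toReal + (c i j k' ^ (-δ)).toReal) := by
    calc ∑ k ∈ I, ∑ k' ∈ I, ∑ i : Fin ℓ, ∑ j : Fin ℓ, ((b i j k k' ^ (-δ)).toReal +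
          (c i j k ^ (-δ)).toReal + (c i j k' ^ (-δ)).toReal)
        = ∑ k ∈ I, ∑ i : Fin ℓ, ∑ k' ∈ I, ∑ j : Fin ℓ, ((b i j k k' ^ (-δ)).toReal +
          (c i j k ^ (-δ)).toReal + (c i j k' ^ (-δ)).toReal) :=
          Finset.sum_congr rfl fun k _ => Finset.sum_comm
      _ = ∑ i : Fin ℓ, ∑ k ∈ I, ∑ k' ∈ I, ∑ j : Fin ℓ, ((b i j k k' ^ (-δ)).toReal +
          (c i j k ^ (-δ)).toReal + (c i j k' ^ (-δ)).toReal) := Finset.sum_comm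
      _ = ∑ i : Fin ℓ, ∑ k ∈ I, ∑ j : Fin ℓ, ∑ k' ∈ I, ((b i j k k' ^ (-δ)).toReal +
          (c i j k ^ (-δ)).toReal + (c i j k' ^ (-δ)).toReal) :=
          Finset.sum_congr rfl fun i _ => Finset.sum_congr rfl fun k _ => Finset.sum_comm
      _ = ∑ i : Fin ℓ, ∑ j : Fin ℓ, ∑ k ∈ I, ∑ k' ∈ I, ((b i j k k' ^ (-δ)).toReal +
          (c i j k ^ (-δ)).toReal + (c i j k' ^ (-δ)).toReal) :=
          Finset.sum_congr rfl fun i _ => Finset.sum_comm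
  have hinner : ∀ i j, ∑ k ∈ I, ∑ k' ∈ I, ((b i j k k' ^ (-δ)).toReal +
      (c i j k ^ (-δ)).toReal + (c i j k' ^ (-δ)).toReal) ≤ 3 * ((N : ℝ) * (K * S)) := by
    intro i j
    have h1 : ∑ k ∈ I, ∑ k' ∈ I, (b i j k k' ^ (-δ)).toReal ≤ (N : ℝ) * (K * S) := by
      calc ∑ k ∈ I, ∑ k' ∈ I, (b i j k k' ^ (-δ)).toReal ≤ ∑ _k ∈ I, K * S :=
            Finset.sum_le_sum fun k hk => hbsum i j k hk
        _ = (N : ℝ) * (K * S) := by rw [Finset.sum_const, nsmul_eq_mul]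
    have h2 : ∑ k ∈ I, ∑ k' ∈ I, (c i j k ^ (-δ)).toReal ≤ (N : ℝ) * (K * S) := by
      calc ∑ k ∈ I, ∑ _k' ∈ I, (c i j k ^ (-δ)).toReal
          = ∑ k ∈ I, (N : ℝ) * (c i j k ^ (-δ)).toReal :=
            Finset.sum_congr rfl fun k _ => by rw [Finset.sum_const, nsmul_eq_mul]
        _ = (N : ℝ) * ∑ k ∈ I, (c i j k ^ (-δ)).toReal := by rw [Finset.mul_sum]
        _ ≤ (N : ℝ) * (K * S) := mul_le_mul_of_nonneg_left (hcsum i j) (Nat.cast_nonneg N)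
    have h3 : ∑ k ∈ I, ∑ k' ∈ I, (c i j k' ^ (-δ)).toReal ≤ (N : ℝ) * (K * S) := by
      calc ∑ k ∈ I, ∑ k' ∈ I, (c i j k' ^ (-δ)).toReal ≤ ∑ _k ∈ I, K * S :=
            Finset.sum_le_sum fun k _ => hcsum i j
        _ = (N : ℝ) * (K * S) := by rw [Finset.sum_const, nsmul_eq_mul]
    calc ∑ k ∈ I, ∑ k' ∈ I, ((b i j k k' ^ (-δ)).toReal +
        (c i j k ^ (-δ)).toReal + (c i j k' ^ (-δ)).toReal)
        = (∑ k ∈ I, ∑ k' ∈ I, (b i j k k' ^ (-δ)).toReal) +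
          (∑ k ∈ I, ∑ k' ∈ I, (c i j k ^ (-δ)).toReal) +
          (∑ k ∈ I, ∑ k' ∈ I, (c i j k' ^ (-δ)).toReal) := by
          simp only [Finset.sum_add_distrib]
      _ ≤ 3 * ((N : ℝ) * (K * S)) := by linarith
  have houter : ∑ i : Fin ℓ, ∑ j : Fin ℓ, ∑ k ∈ I, ∑ k' ∈ I, ((b i j k k' ^ (-δ)).toReal +
      (c i j k ^ (-δ)).toReal + (c i j k' ^ (-δ)).toReal) ≤
      (ℓ : ℝ) * ((ℓ : ℝ) * (3 * ((N : ℝ) * (K * S)))) := by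
    calc ∑ i : Fin ℓ, ∑ j : Fin ℓ, ∑ k ∈ I, ∑ k' ∈ I, ((b i j k k' ^ (-δ)).toReal +
          (c i j k ^ (-δ)).toReal + (c i j k' ^ (-δ)).toReal)
        ≤ ∑ _i : Fin ℓ, ∑ _j : Fin ℓ, 3 * ((N : ℝ) * (K * S)) :=
          Finset.sum_le_sum fun i _ => Finset.sum_le_sum fun j _ => hinner i j
      _ = (ℓ : ℝ) * ((ℓ : ℝ) * (3 * ((N : ℝ) * (K * S)))) := by
          simp [Finset.sum_const, Finset.card_univ, nsmul_eq_mul]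
  -- put everything together
  have hS' : S ≤ (N : ℝ) ^ (1 - δ) / (1 - δ) := sum_rpow_neg_le hδ0 hδ1 N
  have hM0 : (0 : ℝ) < M := by linarith
  have htotal : ∫ y, (∑ k ∈ I, F k y) ^ 2 ∂ν ≤
      M * ((ℓ : ℝ) * ((ℓ : ℝ) * (3 * ((N : ℝ) * (K * ((N : ℝ) ^ (1 - δ) / (1 - δ))))))) := by
    rw [hexp]
    refine le_trans hchain ?_
    rw [hswap]
    refine le_trans (mul_le_mul_of_nonneg_left houter hM0.le) ?_
    apply mul_le_mul_of_nonneg_left _ hM0.le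
    have hNnn : (0 : ℝ) ≤ (N : ℝ) := hN0.le
    have hl0 : (0 : ℝ) ≤ (ℓ : ℝ) := Nat.cast_nonneg ℓ
    exact mul_le_mul_of_nonneg_left (mul_le_mul_of_nonneg_left (mul_le_mul_of_nonneg_left
      (mul_le_mul_of_nonneg_left (mul_le_mul_of_nonneg_left hS' hKnn) hNnn)
      (by norm_num : (0:ℝ) ≤ 3)) hl0) hl0
  -- final arithmetic
  have hNn : (N : ℝ) = (n : ℝ) - (m : ℝ) := by
    rw [hIcard]
    exact_mod_cast Nat.cast_sub hmn.le
  rw [← hNn]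
  refine le_trans htotal ?_
  have e1 : K = 2 ^ δ * M ^ δ := by
    rw [hK, Real.mul_rpow (by norm_num) hM0.le]
  have h23 : (2 : ℝ) ^ (3 : ℝ) = 8 := by
    rw [show (3 : ℝ) = ((3 : ℕ) : ℝ) by norm_num, Real.rpow_natCast]; norm_num
  have e2 : (2 : ℝ) ^ (3 + δ) = 8 * 2 ^ δ := by
    rw [Real.rpow_add (by norm_num : (0 : ℝ) < 2), h23]
  have e3 : M ^ (1 + δ) = M * M ^ δ := by
    rw [Real.rpow_add hM0, Real.rpow_one]
  have e4 : (N : ℝ) ^ (2 - δ) = (N : ℝ) * (N : ℝ) ^ (1 - δ) := by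
    rw [show (2 : ℝ) - δ = 1 + (1 - δ) by ring, Real.rpow_add hN0, Real.rpow_one]
  rw [e2, e3, e4, div_eq_mul_inv, e1]
  have hP : 0 ≤ 2 ^ δ * M ^ δ * M * (1 - δ)⁻¹ * (ℓ : ℝ) ^ 2 * ((N : ℝ) * (N : ℝ) ^ (1 - δ)) := by
    apply mul_nonneg
    apply mul_nonneg
    apply mul_nonneg
    apply mul_nonneg
    apply mul_nonneg
    · exact Real.rpow_nonneg (by norm_num) _
    · exact Real.rpow_nonneg hM0.le _
    · exact hM0.le
    · exact inv_nonneg.mpr h1δ.le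
    · positivity
    · exact mul_nonneg hN0.le (Real.rpow_nonneg hN0.le _)
  calc M * ((ℓ : ℝ) * ((ℓ : ℝ) * (3 * ((N : ℝ) * (2 ^ δ * M ^ δ *
        ((N : ℝ) ^ (1 - δ) * (1 - δ)⁻¹))))))
      = 3 * (2 ^ δ * M ^ δ * M * (1 - δ)⁻¹ * (ℓ : ℝ) ^ 2 *
          ((N : ℝ) * (N : ℝ) ^ (1 - δ))) := by ring
    _ ≤ 8 * (2 ^ δ * M ^ δ * M * (1 - δ)⁻¹ * (ℓ : ℝ) ^ 2 *
          ((N : ℝ) * (N : ℝ) ^ (1 - δ))) := by linarith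
    _ = 8 * 2 ^ δ * (M * M ^ δ) * (1 - δ)⁻¹ * (ℓ : ℝ) ^ 2 *
          ((N : ℝ) * (N : ℝ) ^ (1 - δ)) := by ring
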